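/- Let P = conv(v_1,...,v_s) ⊂ S = conv(0, v_1,...,v_d) as above, set H = conv(v_1,...,v_d), K_i = {x ∈ S : x_i = 0}, K = (∪_{i=1}^d K_i) \ H, and L = ∂P \ H. Define ψ: L → K by ψ(α) = α if some coordinate of α vanishes, and ψ(α) = (α_1,...,α_{d-1},0) otherwise. Then ψ is well-defined (ψ(L) ⊆ K) and injective. -/

import Mathlib

open Finset Set

lemma aux_decomp {d : ℕ} (A : Fin d → ℝ) (hA : ∀ i, A i ≠ 0) (x : Fin d → ℝ) :
    ∑ i, (x i / A i) • (Pi.single i (A i) : Fin d → ℝ) = x := by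
  funext j
  rw [Finset.sum_apply, Finset.sum_eq_single j]
  · simp [div_mul_cancel₀ _ (hA j)]
  · intro i _ hij
    simp [Pi.single_eq_of_ne (Ne.symm hij)]
  · simp

lemma aux_single_sum {d : ℕ} (A : Fin d → ℝ) (hA : ∀ i, 0 < A i) (i : Fin d) :
    ∑ j, (Pi.single i (A i) : Fin d → ℝ) j / A j = 1 := by
  rw [Finset.sum_eq_single i]
  · simp [div_self (hA i).ne']
  · intro j _ hji
    simp [Pi.single_eq_of_ne hji]
  · simp

lemma aux_single_nonneg {d : ℕ} (A : Fin d → ℝ) (hA : ∀ i, 0 < A i) (i j : Fin d) :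
    0 ≤ (Pi.single i (A i) : Fin d → ℝ) j := by
  rcases eq_or_ne j i with h | h
  · subst h; simp [(hA j).le]
  · simp [Pi.single_eq_of_ne h]

lemma aux_face {d : ℕ} (A : Fin d → ℝ) (hA : ∀ i, 0 < A i) :
    convexHull ℝ (Set.range fun i : Fin d => (Pi.single i (A i) : Fin d → ℝ))
      = {x : Fin d → ℝ | (∀ j, 0 ≤ x j) ∧ ∑ j, x j / A j = 1} := by
  apply Set.Subset.antisymm
  · apply convexHull_min
    · rintro _ ⟨i, rfl⟩
      exact ⟨aux_single_nonneg A hA i, aux_single_sum A hA i⟩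
    · rintro x ⟨hx0, hx1⟩ y ⟨hy0, hy1⟩ p q hp hq hpq
      refine ⟨fun j => by have := hx0 j; have := hy0 j; simp only [Pi.add_apply,
        Pi.smul_apply, smul_eq_mul]; nlinarith, ?_⟩
      have : ∀ j, (p • x + q • y) j / A j = p * (x j / A j) + q * (y j / A j) := by
        intro j
        simp only [Pi.add_apply, Pi.smul_apply, smul_eq_mul]
        ring
      rw [Finset.sum_congr rfl fun j _ => this j, Finset.sum_add_distrib,
        ← Finset.mul_sum, ← Finset.mul_sum, hx1, hy1]
      linarith
  · rintro x ⟨hx0, hx1⟩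
    have h := Finset.centerMass_mem_convexHull (Finset.univ)
      (w := fun j => x j / A j) (z := fun j : Fin d => (Pi.single j (A j) : Fin d → ℝ))
      (fun i _ => div_nonneg (hx0 i) (hA i).le)
      (by rw [hx1]; norm_num)
      (fun i _ => Set.mem_range_self i)
    rwa [Finset.centerMass_eq_of_sum_1 _ _ hx1, aux_decomp A (fun i => (hA i).ne') x] at h

lemma aux_simplex {d : ℕ} (A : Fin d → ℝ) (hA : ∀ i, 0 < A i) :
    convexHull ℝ (insert 0 (Set.range fun i : Fin d => (Pi.single i (A i) : Fin d → ℝ)))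
      = {x : Fin d → ℝ | (∀ j, 0 ≤ x j) ∧ ∑ j, x j / A j ≤ 1} := by
  apply Set.Subset.antisymm
  · apply convexHull_min
    · rintro y (rfl | ⟨i, rfl⟩)
      · exact ⟨fun j => le_refl 0, by simp⟩
      · exact ⟨aux_single_nonneg A hA i, le_of_eq (aux_single_sum A hA i)⟩
    · rintro x ⟨hx0, hx1⟩ y ⟨hy0, hy1⟩ p q hp hq hpq
      refine ⟨fun j => by have := hx0 j; have := hy0 j; simp only [Pi.add_apply,
        Pi.smul_apply, smul_eq_mul]; nlinarith, ?_⟩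
      have : ∀ j, (p • x + q • y) j / A j = p * (x j / A j) + q * (y j / A j) := by
        intro j
        simp only [Pi.add_apply, Pi.smul_apply, smul_eq_mul]
        ring
      rw [Finset.sum_congr rfl fun j _ => this j, Finset.sum_add_distrib,
        ← Finset.mul_sum, ← Finset.mul_sum]
      nlinarith
  · rintro x ⟨hx0, hx1⟩
    set t := ∑ j, x j / A j with hT
    have ht0 : 0 ≤ t := Finset.sum_nonneg fun j _ => div_nonneg (hx0 j) (hA j).le
    rcases eq_or_lt_of_le ht0 with h0 | h0
    · have hx : x = 0 := by
        funext j
        have hall := (Finset.sum_eq_zero_iff_of_nonneg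
          (fun j _ => div_nonneg (hx0 j) (hA j).le)).mp h0.symm j (Finset.mem_univ j)
        have := (hA j).ne'
        field_simp at hall
        simpa using hall
      rw [hx]
      exact subset_convexHull ℝ _ (Set.mem_insert 0 _)
    · set y := t⁻¹ • x with hy
      have hy0 : ∀ j, 0 ≤ y j := fun j => by
        simp only [hy, Pi.smul_apply, smul_eq_mul]
        exact mul_nonneg (inv_nonneg.2 ht0) (hx0 j)
      have hy1 : ∑ j, y j / A j = 1 := by
        have : ∀ j, y j / A j = t⁻¹ * (x j / A j) := by
          intro j; simp only [hy, Pi.smul_apply, smul_eq_mul]; ring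
        rw [Finset.sum_congr rfl fun j _ => this j, ← Finset.mul_sum, ← hT,
          inv_mul_cancel₀ h0.ne']
      have hymem : y ∈ convexHull ℝ (insert 0 (Set.range fun i : Fin d => (Pi.single i (A i) : Fin d → ℝ))) :=
        convexHull_mono (Set.subset_insert _ _)
          ((aux_face A hA).symm ▸ Set.mem_setOf_eq ▸ ⟨hy0, hy1⟩)
      have h0mem : (0 : Fin d → ℝ) ∈ convexHull ℝ
          (insert 0 (Set.range fun i : Fin d => (Pi.single i (A i) : Fin d → ℝ))) :=
        subset_convexHull ℝ _ (Set.mem_insert 0 _)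
      have hle1 : t ≤ 1 := hx1
      have := (convex_convexHull ℝ _) hymem h0mem h0.le (by linarith : (0:ℝ) ≤ 1 - t)
        (by ring)
      have hxy : t • y + (1 - t) • (0 : Fin d → ℝ) = x := by
        rw [hy, smul_smul, mul_inv_cancel₀ h0.ne', one_smul, smul_zero, add_zero]
      rwa [hxy] at this


open Finset Set

lemma aux_key {d : ℕ} (A : Fin d → ℝ) (hA : ∀ i, 0 < A i)
    {P : Set (Fin d → ℝ)} (hconv : Convex ℝ P)
    (hHP : ∀ x : Fin d → ℝ, (∀ j, 0 ≤ x j) → ∑ j, x j / A j = 1 → x ∈ P)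
    (hPle : ∀ x ∈ P, ∑ j, x j / A j ≤ 1)
    {z : Fin d → ℝ} (hz : z ∈ interior P)
    (l : Fin d) {α β : Fin d → ℝ}
    (hα : α ∈ P) (hβ : β ∈ P) (hβi : β ∉ interior P)
    (hβ1 : ∑ j, β j / A j ≠ 1) (hβpos : ∀ j, 0 < β j)
    (heq : ∀ j, j ≠ l → α j = β j) (hl : α l < β l) : False := by
  obtain ⟨f, hf⟩ := geometric_hahn_banach_open_point hconv.interior isOpen_interior hβi
  have hfz := hf z hz
  -- f is at most f β on all of P
  have hle : ∀ x ∈ P, f x ≤ f β := by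
    intro x hx
    by_contra hgt
    push_neg at hgt
    have hzx : f z < f x := lt_trans hfz hgt
    set D := f x - f z with hD
    have hD0 : 0 < D := by simp only [hD]; linarith
    set ε := (f x - f β) / (2 * D) with hε
    have hε0 : 0 < ε := div_pos (by linarith) (by linarith)
    have hε1 : ε < 1 := by
      rw [div_lt_one (by linarith)]
      simp only [hD]
      linarith
    have hmem : ε • z + (1 - ε) • x ∈ interior P :=
      hconv.combo_interior_self_subset_interior hε0 (by linarith : (0:ℝ) ≤ 1 - ε)
        (by ring) (Set.add_mem_add (Set.smul_mem_smul_set hz) (Set.smul_mem_smul_set hx))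
    have hlt2 := hf _ hmem
    have hfval : f (ε • z + (1 - ε) • x) = ε * f z + (1 - ε) * f x := by
      rw [map_add, map_smul, map_smul]; rfl
    rw [hfval] at hlt2
    have hεD : ε * (2 * D) = f x - f β := div_mul_cancel₀ _ (by linarith : (2:ℝ) * D ≠ 0)
    nlinarith [hlt2, hεD, hgt, hfz]
  set T := ∑ j, β j / A j with hT
  have hT1 : T < 1 := lt_of_le_of_ne (hPle β hβ) hβ1
  set c := A l * (1 - T) with hc
  have hc0 : 0 < c := mul_pos (hA l) (by linarith)
  set γ := Function.update β l (β l + c) with hγ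
  have sum_update : ∀ r : ℝ, ∑ j, Function.update β l r j / A j = T - β l / A l + r / A l := by
    intro r
    have h1 : (fun j => Function.update β l r j / A j)
        = Function.update (fun j => β j / A j) l (r / A l) := by
      funext j
      rcases eq_or_ne j l with h | h
      · subst h; simp
      · simp [Function.update_of_ne h]
    calc ∑ j, Function.update β l r j / A j
        = ∑ j, Function.update (fun j => β j / A j) l (r / A l) j := by rw [h1]
      _ = r / A l + ∑ j ∈ Finset.univ \ {l}, β j / A j :=
          Finset.sum_update_of_mem (Finset.mem_univ l) (fun j => β j / A j) (r / A l)
      _ = T - β l / A l + r / A l := by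
          have h2 := Finset.sum_eq_sum_sdiff_singleton_add (Finset.mem_univ l)
            (fun j => β j / A j)
          rw [← hT] at h2
          linarith
  have hγsum : ∑ j, γ j / A j = 1 := by
    rw [hγ, sum_update]
    have hone : (β l + c) / A l = β l / A l + (1 - T) := by
      rw [hc, add_div, mul_div_cancel_left₀ (1 - T) (hA l).ne']
    rw [hone]
    ring
  have hγpos : ∀ j, 0 < γ j := by
    intro j
    rcases eq_or_ne j l with h | h
    · rw [h, hγ, Function.update_self]; linarith [hβpos l]
    · rw [hγ, Function.update_of_ne h]; exact hβpos j
  have hγP : γ ∈ P := hHP γ (fun j => (hγpos j).le) hγsum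
  have hγl : γ l = β l + c := by simp [hγ]
  have hd1 : 0 < γ l - α l := by rw [hγl]; linarith
  set t := (β l - α l) / (γ l - α l) with ht
  have ht0 : 0 < t := div_pos (by linarith) hd1
  have ht1 : t < 1 := by
    rw [div_lt_one hd1, hγl]
    linarith
  have htprod : t * (γ l - α l) = β l - α l := by
    rw [ht]
    field_simp
  have hcomb : β = (1 - t) • α + t • γ := by
    funext j
    rcases eq_or_ne j l with h | h
    · subst h
      simp only [Pi.add_apply, Pi.smul_apply, smul_eq_mul]
      nlinarith [htprod]
    · simp only [Pi.add_apply, Pi.smul_apply, smul_eq_mul, hγ,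
        Function.update_of_ne h, heq j h]
      ring
  have hfβcomb : f β = (1 - t) * f α + t * f γ := by
    conv_lhs => rw [hcomb]
    rw [map_add, map_smul, map_smul]
    rfl
  have hfγ : f γ = f β := by
    nlinarith [hle α hα, hle γ hγP]
  -- f vanishes in direction l
  have hdiff : γ - β = c • (Pi.single l (1:ℝ) : Fin d → ℝ) := by
    funext j
    rcases eq_or_ne j l with h | h
    · subst h
      simp [hγ]
    · simp [hγ, Function.update_of_ne h, Pi.single_eq_of_ne h]
  have hfl : f (Pi.single l (1:ℝ) : Fin d → ℝ) = 0 := by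
    have h1 : f γ - f β = c * f (Pi.single l (1:ℝ) : Fin d → ℝ) := by
      rw [← map_sub, hdiff, map_smul]; rfl
    rw [hfγ, sub_self] at h1
    exact (mul_eq_zero.mp h1.symm).resolve_left hc0.ne'
  have hsingleP : ∀ i, (Pi.single i (A i) : Fin d → ℝ) ∈ P := fun i =>
    hHP _ (aux_single_nonneg A hA i) (aux_single_sum A hA i)
  have hfγsum : f γ = ∑ i, (γ i / A i) * f (Pi.single i (A i) : Fin d → ℝ) := by
    conv_lhs => rw [← aux_decomp A (fun i => (hA i).ne') γ]
    rw [map_sum]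
    exact Finset.sum_congr rfl fun i _ => by rw [map_smul]; rfl
  have hfv : ∀ i, f (Pi.single i (A i) : Fin d → ℝ) = f β := by
    by_contra hcon
    push_neg at hcon
    obtain ⟨i0, hi0⟩ := hcon
    have hi0' : f (Pi.single i0 (A i0) : Fin d → ℝ) < f β :=
      lt_of_le_of_ne (hle _ (hsingleP i0)) hi0
    have hlt3 : ∑ i, (γ i / A i) * f (Pi.single i (A i) : Fin d → ℝ)
        < ∑ i, (γ i / A i) * f β := by
      apply Finset.sum_lt_sum
      · intro i _
        exact mul_le_mul_of_nonneg_left (hle _ (hsingleP i))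
          (div_pos (hγpos i) (hA i)).le
      · exact ⟨i0, Finset.mem_univ _,
          mul_lt_mul_of_pos_left hi0' (div_pos (hγpos i0) (hA i0))⟩
    rw [← hfγsum, ← Finset.sum_mul, hγsum, one_mul, hfγ] at hlt3
    exact lt_irrefl _ hlt3
  have hfβ0 : f β = 0 := by
    have h1 := hfv l
    have h2 : (Pi.single l (A l) : Fin d → ℝ) = A l • (Pi.single l (1:ℝ) : Fin d → ℝ) := by
      funext j
      rcases eq_or_ne j l with h | h
      · subst h; simp
      · simp [Pi.single_eq_of_ne h]
    rw [h2, map_smul] at h1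
    rw [← h1]
    simp [hfl]
  have hfz0 : f z = 0 := by
    conv_lhs => rw [← aux_decomp A (fun i => (hA i).ne') z]
    rw [map_sum]
    apply Finset.sum_eq_zero
    intro i _
    rw [map_smul, smul_eq_mul, hfv i, hfβ0, mul_zero]
  rw [hfβ0, hfz0] at hfz
  exact lt_irrefl _ hfz


lemma aux_span {d s : ℕ} (hd : 0 < d) (A : Fin d → ℝ) (hA : ∀ i, 0 < A i)
    (v : Fin s → (Fin d → ℝ)) (k : Fin s)
    (hmem : ∀ i : Fin d, (Pi.single i (A i) : Fin d → ℝ) ∈ Set.range v)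
    (hk : ∑ j, v k j / A j < 1) :
    affineSpan ℝ (Set.range v) = ⊤ := by
  have : Nonempty (Fin d) := ⟨⟨0, hd⟩⟩
  have hne : (Set.range v).Nonempty := ⟨v k, Set.mem_range_self k⟩
  rw [AffineSubspace.affineSpan_eq_top_iff_vectorSpan_eq_top_of_nonempty ℝ (Fin d → ℝ) (Fin d → ℝ) hne]
  set b : Fin d → (Fin d → ℝ) := fun i => (Pi.single i (A i) : Fin d → ℝ) - v k with hb
  have hbmem : ∀ i, b i ∈ vectorSpan ℝ (Set.range v) := fun i => by
    rw [hb]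
    exact vsub_mem_vectorSpan ℝ (hmem i) (Set.mem_range_self k)
  have hli : LinearIndependent ℝ b := by
    rw [Fintype.linearIndependent_iff]
    intro g hg
    have hx : ∑ i, g i • (Pi.single i (A i) : Fin d → ℝ) = (∑ i, g i) • v k := by
      have h1 : ∑ i, (g i • (Pi.single i (A i) : Fin d → ℝ) - g i • v k) = 0 := by
        rw [← hg]
        exact Finset.sum_congr rfl fun i _ => by rw [hb, smul_sub]
      rw [Finset.sum_sub_distrib, sub_eq_zero] at h1
      rw [h1, ← Finset.sum_smul]
    set G := ∑ i, g i with hG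
    have hcoord : ∀ j, (∑ i, g i • (Pi.single i (A i) : Fin d → ℝ)) j = g j * A j := by
      intro j
      rw [Finset.sum_apply, Finset.sum_eq_single j]
      · simp
      · intro i _ hij
        simp [Pi.single_eq_of_ne (Ne.symm hij)]
      · simp
    have h1 : ∑ j, (∑ i, g i • (Pi.single i (A i) : Fin d → ℝ)) j / A j = G := by
      rw [Finset.sum_congr rfl fun j _ => by rw [hcoord j]]
      rw [hG]
      exact Finset.sum_congr rfl fun j _ => mul_div_cancel_right₀ (g j) (hA j).ne'
    have h2 : ∑ j, ((G • v k) j) / A j = G * ∑ j, v k j / A j := by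
      rw [Finset.mul_sum]
      exact Finset.sum_congr rfl fun j _ => by
        simp only [Pi.smul_apply, smul_eq_mul]
        ring
    rw [hx, h2] at h1
    have hG0 : G = 0 := by
      by_contra hG0
      have := mul_left_cancel₀ hG0 (by rw [h1, mul_one] : G * (∑ j, v k j / A j) = G * 1)
      linarith
    intro i
    have h3 : g i * A i = 0 := by
      rw [← hcoord i, hx, hG0]
      simp
    exact (mul_eq_zero.mp h3).resolve_right (hA i).ne'
  have hspan : Submodule.span ℝ (Set.range b) = ⊤ :=
    hli.span_eq_top_of_card_eq_finrank (by simp)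
  rw [eq_top_iff, ← hspan]
  exact Submodule.span_le.mpr (by rintro _ ⟨i, rfl⟩; exact hbmem i)
lemma aux_sum_update {d : ℕ} (A x : Fin d → ℝ) (l : Fin d) (r : ℝ) :
    ∑ j, Function.update x l r j / A j = (∑ j, x j / A j) - x l / A l + r / A l := by
  have h1 : (fun j => Function.update x l r j / A j)
      = Function.update (fun j => x j / A j) l (r / A l) := by
    funext j
    rcases eq_or_ne j l with h | h
    · subst h; simp
    · simp [Function.update_of_ne h]
  calc ∑ j, Function.update x l r j / A j
      = ∑ j, Function.update (fun j => x j / A j) l (r / A l) j := by rw [h1]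
    _ = r / A l + ∑ j ∈ Finset.univ \ {l}, x j / A j :=
        Finset.sum_update_of_mem (Finset.mem_univ l) (fun j => x j / A j) (r / A l)
    _ = (∑ j, x j / A j) - x l / A l + r / A l := by
        have h2 := Finset.sum_eq_sum_sdiff_singleton_add (Finset.mem_univ l)
          (fun j => x j / A j)
        linarith


/-- With `P = conv(v 1, …, v s) ⊆ S = conv(0, v 1, …, v d)` (`v i = a i • e i` for
`i ≤ d`, and `⟨v i, α₀⟩ < 1`, `v i ∈ ℕ^d` for `i > d`), set
`H = conv(v 1, …, v d)`, `K i = {x ∈ S : x i = 0}`, `K = (⋃ i, K i) \ H`, and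
`L = ∂P \ H` (relative boundary).  The map `ψ : L → K` given by `ψ(α) = α` if some
coordinate of `α` vanishes and `ψ(α) = (α 1, …, α (d-1), 0)` otherwise, is
well-defined and injective. -/
theorem psi_mapsTo_and_injective (d s : ℕ) (hd : 0 < d) (hds : d ≤ s)
    (a : Fin d → ℕ) (ha : ∀ i, 0 < a i)
    (v : Fin s → (Fin d → ℝ))
    (hv1 : ∀ i : Fin d, v (Fin.castLE hds i) = Pi.single i (a i : ℝ))
    (hvnat : ∀ i j, ∃ m : ℕ, v i j = (m : ℝ))
    (hlt : ∀ i : Fin s, d ≤ (i : ℕ) → ∑ j, v i j / (a j : ℝ) < 1)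
    (P S H L K : Set (Fin d → ℝ))
    (hP : P = convexHull ℝ (Set.range v))
    (hS : S = convexHull ℝ
      (insert 0 (Set.range fun i : Fin d => v (Fin.castLE hds i))))
    (hH : H = convexHull ℝ (Set.range fun i : Fin d => v (Fin.castLE hds i)))
    (hL : L = intrinsicFrontier ℝ P \ H)
    (hK : K = (⋃ i : Fin d, {x ∈ S | x i = 0}) \ H)
    (ψ : (Fin d → ℝ) → (Fin d → ℝ))
    (hψ : ∀ x, ψ x = if ∃ i, x i = 0 then x
      else Function.update x ⟨d - 1, by omega⟩ 0) :
    Set.MapsTo ψ L K ∧ Set.InjOn ψ L := by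
  classical
  have hA : ∀ i : Fin d, 0 < ((a i : ℝ)) := fun i => by exact_mod_cast ha i
  have hfun_eq : (fun i : Fin d => v (Fin.castLE hds i))
      = fun i : Fin d => (Pi.single i ((a i : ℝ)) : Fin d → ℝ) := funext hv1
  have hSset : S = {x : Fin d → ℝ | (∀ j, 0 ≤ x j) ∧ ∑ j, x j / (a j : ℝ) ≤ 1} := by
    rw [hS, hfun_eq]; exact aux_simplex (fun i => ((a i : ℝ))) hA
  have hHset : H = {x : Fin d → ℝ | (∀ j, 0 ≤ x j) ∧ ∑ j, x j / (a j : ℝ) = 1} := by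
    rw [hH, hfun_eq]; exact aux_face (fun i => ((a i : ℝ))) hA
  have hvS : ∀ i : Fin s, (∀ j, 0 ≤ v i j) ∧ ∑ j, v i j / (a j : ℝ) ≤ 1 := by
    intro i
    by_cases hid : (i : ℕ) < d
    · have hcast : Fin.castLE hds ⟨(i : ℕ), hid⟩ = i := by ext; rfl
      have hvi := hv1 ⟨(i : ℕ), hid⟩
      rw [hcast] at hvi
      rw [hvi]
      exact ⟨fun j => aux_single_nonneg (fun i => ((a i : ℝ))) hA _ j,
        le_of_eq (aux_single_sum (fun i => ((a i : ℝ))) hA _)⟩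
    · push_neg at hid
      constructor
      · intro j; obtain ⟨m, hm⟩ := hvnat i j; rw [hm]; exact m.cast_nonneg
      · exact (hlt i hid).le
  have hPsubS : P ⊆ S := by
    rw [hP]
    apply convexHull_min _ (hS ▸ convex_convexHull ℝ _)
    rintro _ ⟨i, rfl⟩
    rw [hSset]
    exact hvS i
  have hPconv : Convex ℝ P := hP ▸ convex_convexHull ℝ _
  have hPclosed : IsClosed P := by
    rw [hP]
    exact ((Set.finite_range v).isCompact_convexHull (𝕜 := ℝ)).isClosed
  have hHsubP : H ⊆ P := by
    rw [hP, hH]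
    apply convexHull_mono
    rintro _ ⟨i, rfl⟩
    exact ⟨Fin.castLE hds i, rfl⟩
  have hLP : ∀ x ∈ L, x ∈ P ∧ x ∉ interior P ∧ x ∉ H := by
    intro x hx
    rw [hL] at hx
    refine ⟨intrinsicFrontier_subset hPclosed hx.1, ?_, hx.2⟩
    intro hxint
    exact (intrinsicFrontier_subset_frontier hx.1).2 hxint
  set l : Fin d := ⟨d - 1, by omega⟩ with hldef
  have hψ' : ∀ x : Fin d → ℝ, ψ x = if ∃ i, x i = 0 then x
      else Function.update x l 0 := hψ
  have hnonneg : ∀ x ∈ P, ∀ j, 0 ≤ x j := fun x hx => by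
    have h := hPsubS hx; rw [hSset] at h; exact h.1
  have hPle : ∀ x ∈ P, ∑ j, x j / (a j : ℝ) ≤ 1 := fun x hx => by
    have h := hPsubS hx; rw [hSset] at h; exact h.2
  rcases eq_or_lt_of_le hds with hsd | hsd
  · -- the degenerate case `s = d`, where `L = ∅`
    have hPH : P ⊆ H := by
      rw [hP, hH]
      apply convexHull_mono
      rintro _ ⟨i, rfl⟩
      have hival : (i : ℕ) < d := by omega
      refine ⟨⟨(i : ℕ), hival⟩, ?_⟩
      apply congrArg v
      exact Fin.ext rfl
    have hLempty : ∀ x, x ∉ L := by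
      intro x hx
      obtain ⟨hxP, _, hxH⟩ := hLP x hx
      exact hxH (hPH hxP)
    exact ⟨fun x hx => absurd hx (hLempty x), fun x hx => absurd hx (hLempty x)⟩
  · -- the main case `d < s`
    have hkT : ∑ j, v ⟨d, hsd⟩ j / (a j : ℝ) < 1 := hlt ⟨d, hsd⟩ (le_refl d)
    have hspan : affineSpan ℝ (Set.range v) = ⊤ := by
      apply aux_span hd (fun i => ((a i : ℝ))) hA v ⟨d, hsd⟩ _ hkT
      intro i
      exact ⟨Fin.castLE hds i, hv1 i⟩
    have hint : (interior P).Nonempty := by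
      rw [hP]
      exact interior_convexHull_nonempty_iff_affineSpan_eq_top.mpr hspan
    obtain ⟨z, hz⟩ := hint
    have hHP' : ∀ x : Fin d → ℝ, (∀ j, 0 ≤ x j) → ∑ j, x j / (a j : ℝ) = 1 → x ∈ P :=
      fun x h1 h2 => hHsubP (by rw [hHset]; exact ⟨h1, h2⟩)
    have key : ∀ α β : Fin d → ℝ, α ∈ P → β ∈ P → β ∉ interior P → β ∉ H →
        (∀ j, 0 < β j) → (∀ j, j ≠ l → α j = β j) → α l < β l → False := by
      intro α β h1 h2 h3 h4 h5 h6 h7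
      apply aux_key (fun i => ((a i : ℝ))) hA hPconv hHP' hPle hz l h1 h2 h3 _ h5 h6 h7
      intro hsum
      exact h4 (by rw [hHset]; exact ⟨fun j => (h5 j).le, hsum⟩)
    have hposof : ∀ x ∈ P, (¬ ∃ i, x i = 0) → ∀ j, 0 < x j := by
      intro x hx hno j
      push_neg at hno
      exact lt_of_le_of_ne (hnonneg x hx j) (Ne.symm (hno j))
    constructor
    · -- `ψ` is well-defined, i.e. maps `L` into `K`
      intro α hα
      obtain ⟨hαP, hαi, hαH⟩ := hLP α hα
      rw [hψ' α]
      by_cases h : ∃ i, α i = 0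
      · rw [if_pos h]
        obtain ⟨i, hi⟩ := h
        rw [hK]
        exact ⟨Set.mem_iUnion.2 ⟨i, ⟨hPsubS hαP, hi⟩⟩, hαH⟩
      · rw [if_neg h]
        have hαl : 0 < α l := hposof α hαP h l
        have hsum0 : ∑ j, Function.update α l 0 j / (a j : ℝ)
            = (∑ j, α j / (a j : ℝ)) - α l / (a l : ℝ) := by
          rw [aux_sum_update]
          simp
        have hstrict : ∑ j, Function.update α l 0 j / (a j : ℝ) < 1 := by
          rw [hsum0]
          have := div_pos hαl (hA l)
          have := hPle α hαP
          linarith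
        have hcoords : ∀ j, 0 ≤ Function.update α l 0 j := by
          intro j
          rcases eq_or_ne j l with rfl | hj
          · simp
          · rw [Function.update_of_ne hj]; exact hnonneg α hαP j
        rw [hK]
        constructor
        · refine Set.mem_iUnion.2 ⟨l, ⟨?_, Function.update_self l 0 α⟩⟩
          rw [hSset]
          exact ⟨hcoords, hstrict.le⟩
        · rw [hHset]
          rintro ⟨-, habs⟩
          rw [habs] at hstrict
          exact lt_irrefl _ hstrict
    · -- `ψ` is injective on `L`
      intro α hα β hβ hψeq
      obtain ⟨hαP, hαi, hαH⟩ := hLP α hα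
      obtain ⟨hβP, hβi, hβH⟩ := hLP β hβ
      rw [hψ' α, hψ' β] at hψeq
      by_cases h1 : ∃ i, α i = 0 <;> by_cases h2 : ∃ i, β i = 0
      · rwa [if_pos h1, if_pos h2] at hψeq
      · rw [if_pos h1, if_neg h2] at hψeq
        exfalso
        have hne : ∀ j, j ≠ l → α j = β j := fun j hj => by
          have hcf := congrFun hψeq j
          rwa [Function.update_of_ne hj] at hcf
        have hαl : α l = 0 := by
          have hcf := congrFun hψeq l
          rwa [Function.update_self] at hcf
        refine key α β hαP hβP hβi hβH (hposof β hβP h2) hne ?_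
        rw [hαl]
        exact hposof β hβP h2 l
      · rw [if_neg h1, if_pos h2] at hψeq
        exfalso
        have hne : ∀ j, j ≠ l → β j = α j := fun j hj => by
          have hcf := congrFun hψeq j
          rw [Function.update_of_ne hj] at hcf
          exact hcf.symm
        have hβl : β l = 0 := by
          have hcf := congrFun hψeq l
          rw [Function.update_self] at hcf
          exact hcf.symm
        refine key β α hβP hαP hαi hαH (hposof α hαP h1) hne ?_
        rw [hβl]
        exact hposof α hαP h1 l
      · rw [if_neg h1, if_neg h2] at hψeq
        have hne : ∀ j, j ≠ l → α j = β j := fun j hj => by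
          have hcf := congrFun hψeq j
          rwa [Function.update_of_ne hj, Function.update_of_ne hj] at hcf
        rcases lt_trichotomy (α l) (β l) with h | h | h
        · exact (key α β hαP hβP hβi hβH (hposof β hβP h2) hne h).elim
        · funext j
          rcases eq_or_ne j l with rfl | hj
          · exact h
          · exact hne j hj
        · exact (key β α hβP hαP hαi hαH (hposof α hαP h1)
            (fun j hj => (hne j hj).symm) h).elim
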